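/- Let N be a natural number, β : Fin N → ℝ with β ℓ > 0 for all ℓ, and equip V := Fin N → ℝ³ with the mass-lumped inner product ⟨φ, ψ⟩_h := ∑ ℓ, β ℓ * (φ ℓ ⬝ ψ ℓ). Let g : V → V → ℝ be a symmetric bilinear form and D : V → V a map satisfying ⟨D φ, ψ⟩_h = −g φ ψ for all φ, ψ ∈ V. Let C_ex > 0, α > 0, k > 0, M ≥ 1, and let m : Fin (M+1) → V and P : Fin M → V be such that for every j < M, writing mid_j := (m j + m (j+1))/2 and dt_j := (m (j+1) − m j)/k, the midpoint scheme holds: for all φ ∈ V, ⟨dt_j, φ⟩_h = −C_ex * ∑ ℓ, β ℓ * ((mid_j ℓ ×ᵥ (D mid_j) ℓ) ⬝ φ ℓ) − ∑ ℓ, β ℓ * ((mid_j ℓ ×ᵥ (P j) ℓ) ⬝ φ ℓ) + α * ∑ ℓ, β ℓ * ((mid_j ℓ ×ᵥ dt_j ℓ) ⬝ φ ℓ). Then for every i < M: (C_ex/2) * g (m (i+1)) (m (i+1)) + α * k * ∑_{j=0}^{i} ‖dt_j‖_h² = (C_ex/2) * g (m 0) (m 0) + k * ∑_{j=0}^{i}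 ⟨dt_j, P j⟩_h. -/

import Mathlib

open scoped InnerProductSpace BigOperators

noncomputable section

/-- ℝ³ with the Euclidean norm and inner product. -/
abbrev R3 := EuclideanSpace ℝ (Fin 3)

/-- The cross product on ℝ³. -/
def cross3 (a b : R3) : R3 := WithLp.toLp 2 (crossProduct a b)

/-- Mass-lumped inner product `⟨φ, ψ⟩_h := ∑ ℓ, β ℓ * (φ ℓ ⬝ ψ ℓ)`. -/
def innh {N : ℕ} (β : Fin N → ℝ) (φ ψ : Fin N → R3) : ℝ :=
  ∑ ℓ, β ℓ * ⟪φ ℓ, ψ ℓ⟫_ℝ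

/-- Mass-lumped norm `‖φ‖_h := √⟨φ, φ⟩_h`. -/
def normh {N : ℕ} (β : Fin N → ℝ) (φ : Fin N → R3) : ℝ :=
  Real.sqrt (innh β φ φ)

lemma key3 (a b p d : R3) (Cex α : ℝ) :
    -Cex * ⟪cross3 a b, -Cex • b - p + α • d⟫_ℝ
      - ⟪cross3 a p, -Cex • b - p + α • d⟫_ℝ
      + α * ⟪cross3 a d, -Cex • b - p + α • d⟫_ℝ = 0 := by
  simp [cross3, crossProduct, PiLp.inner_apply, RCLike.inner_apply, conj_trivial,
    Fin.sum_univ_three, PiLp.smul_apply, PiLp.sub_apply, PiLp.add_apply, smul_eq_mul]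
  ring

lemma innh_comm {N : ℕ} (β : Fin N → ℝ) (φ ψ : Fin N → R3) :
    innh β φ ψ = innh β ψ φ :=
  Finset.sum_congr rfl fun ℓ _ => by rw [real_inner_comm]

lemma innh_self_nonneg {N : ℕ} (β : Fin N → ℝ) (hβ : ∀ ℓ, 0 < β ℓ)
    (φ : Fin N → R3) : 0 ≤ innh β φ φ :=
  Finset.sum_nonneg fun ℓ _ => mul_nonneg (hβ ℓ).le real_inner_self_nonneg

lemma sq_normh {N : ℕ} (β : Fin N → ℝ) (hβ : ∀ ℓ, 0 < β ℓ)
    (φ : Fin N → R3) : (normh β φ) ^ 2 = innh β φ φ :=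
  Real.sq_sqrt (innh_self_nonneg β hβ φ)

lemma innh_expand {N : ℕ} (β : Fin N → ℝ) (φ x y z : Fin N → R3) (c a : ℝ) :
    innh β φ (-c • x - y + a • z)
      = -c * innh β φ x - innh β φ y + a * innh β φ z := by
  simp only [innh, Pi.add_apply, Pi.sub_apply, Pi.smul_apply, inner_add_right,
    inner_sub_right, inner_smul_right, Finset.mul_sum, mul_add, mul_sub,
    Finset.sum_add_distrib, Finset.sum_sub_distrib]
  congr 1 <;> [skip; exact Finset.sum_congr rfl fun ℓ _ => by ring]
  congr 1 <;> exact Finset.sum_congr rfl fun ℓ _ => by ring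

lemma Iic_succ_fin {n : ℕ} (i : Fin n) :
    Finset.Iic (i.succ) = insert i.succ (Finset.Iic i.castSucc) := by
  ext j
  simp only [Finset.mem_Iic, Finset.mem_insert, Fin.le_def, Fin.ext_iff,
    Fin.val_succ, Fin.coe_castSucc]
  omega


/-- telescoped discrete energy equality for the implicit-explicit
midpoint scheme (Lemma 3.3(b)). -/
theorem stmt4 {N : ℕ} (β : Fin N → ℝ) (hβ : ∀ ℓ, 0 < β ℓ)
    (g : (Fin N → R3) →ₗ[ℝ] (Fin N → R3) →ₗ[ℝ] ℝ)
    (hg : ∀ u v : Fin N → R3, g u v = g v u)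
    (D : (Fin N → R3) → (Fin N → R3))
    (hD : ∀ φ ψ : Fin N → R3, innh β (D φ) ψ = - g φ ψ)
    (Cex α k : ℝ) (hCex : 0 < Cex) (hα : 0 < α) (hk : 0 < k)
    (M : ℕ) (hM : 1 ≤ M)
    (m : Fin (M + 1) → (Fin N → R3)) (P : Fin M → (Fin N → R3))
    (hscheme : ∀ j : Fin M, ∀ φ : Fin N → R3,
      innh β (k⁻¹ • (m j.succ - m j.castSucc)) φ
        = -Cex * (∑ ℓ, β ℓ *
              ⟪cross3 (((2:ℝ)⁻¹ • (m j.castSucc + m j.succ)) ℓ)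
                (D ((2:ℝ)⁻¹ • (m j.castSucc + m j.succ)) ℓ), φ ℓ⟫_ℝ)
          - (∑ ℓ, β ℓ *
              ⟪cross3 (((2:ℝ)⁻¹ • (m j.castSucc + m j.succ)) ℓ) (P j ℓ), φ ℓ⟫_ℝ)
          + α * (∑ ℓ, β ℓ *
              ⟪cross3 (((2:ℝ)⁻¹ • (m j.castSucc + m j.succ)) ℓ)
                ((k⁻¹ • (m j.succ - m j.castSucc)) ℓ), φ ℓ⟫_ℝ)) :
    ∀ i : Fin M,
      Cex / 2 * g (m i.succ) (m i.succ)
          + α * k * ∑ j ∈ Finset.Iic i, (normh β (k⁻¹ • (m j.succ - m j.castSucc))) ^ 2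
        = Cex / 2 * g (m 0) (m 0)
          + k * ∑ j ∈ Finset.Iic i, innh β (k⁻¹ • (m j.succ - m j.castSucc)) (P j) := by
  -- per-step energy identity
  have step : ∀ j : Fin M,
      Cex / 2 * g (m j.succ) (m j.succ)
          + α * k * (normh β (k⁻¹ • (m j.succ - m j.castSucc))) ^ 2
        = Cex / 2 * g (m j.castSucc) (m j.castSucc)
          + k * innh β (k⁻¹ • (m j.succ - m j.castSucc)) (P j) := by
    intro j
    set a := m j.castSucc with ha
    set b := m j.succ with hb
    set dt : Fin N → R3 := k⁻¹ • (b - a) with hdt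
    set mid : Fin N → R3 := (2:ℝ)⁻¹ • (a + b) with hmid
    set w : Fin N → R3 := -Cex • D mid - P j + α • dt with hw
    -- scheme tested with w gives zero
    have hz : innh β dt w = 0 := by
      rw [hscheme j w]
      have hcomb : ∀ S1 S2 S3 : Fin N → ℝ, -Cex * (∑ ℓ, S1 ℓ) - (∑ ℓ, S2 ℓ) + α * (∑ ℓ, S3 ℓ)
          = ∑ ℓ, (-Cex * S1 ℓ - S2 ℓ + α * S3 ℓ) := by
        intro S1 S2 S3
        simp [Finset.mul_sum, Finset.sum_add_distrib, Finset.sum_sub_distrib]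
      rw [hcomb]
      apply Finset.sum_eq_zero
      intro ℓ _
      have hwl : w ℓ = -Cex • (D mid) ℓ - P j ℓ + α • dt ℓ := rfl
      have := key3 (mid ℓ) ((D mid) ℓ) (P j ℓ) (dt ℓ) Cex α
      rw [hwl]
      linear_combination β ℓ * this
    have hexp : innh β dt w
        = -Cex * innh β dt (D mid) - innh β dt (P j) + α * innh β dt dt :=
      innh_expand β dt (D mid) (P j) dt Cex α
    have h2 : -Cex * innh β dt (D mid) - innh β dt (P j) + α * innh β dt dt = 0 := by
      rw [← hexp, hz]
    have h3 : innh β dt (D mid) = - g mid dt := by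
      rw [innh_comm, hD]
    have h4 : g b b - g a a = 2 * k * g mid dt := by
      have hgd : g mid dt = (2:ℝ)⁻¹ * (k⁻¹ * (g (a+b) (b-a))) := by
        rw [hmid, hdt]
        simp only [map_smul, LinearMap.smul_apply, smul_eq_mul]
        ring
      have hexpand : g (a+b) (b-a) = g a b - g a a + (g b b - g b a) := by
        simp only [map_add, map_sub, LinearMap.add_apply, LinearMap.sub_apply]
        ring
      rw [hgd, hexpand, hg a b]
      field_simp
      ring
    rw [sq_normh β hβ]
    linear_combination (Cex/2) * h4 + k * h2 + (k*Cex) * h3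
  -- telescoping by induction
  obtain ⟨M', rfl⟩ : ∃ M', M = M' + 1 := ⟨M - 1, by omega⟩
  intro i
  induction i using Fin.induction with
  | zero =>
      have h0 : Finset.Iic (0 : Fin (M' + 1)) = {0} := by
        ext j; simp
      have := step 0
      rw [h0]
      simpa [Fin.castSucc_zero] using this
  | succ i ih =>
      rw [Iic_succ_fin i, Finset.sum_insert (by simp [Fin.castSucc_lt_succ_iff]),
        Finset.sum_insert (by simp [Fin.castSucc_lt_succ_iff])]
      have hs := step i.succ
      have hcs : (i.succ).castSucc = (i.castSucc).succ := (Fin.succ_castSucc i).symm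
      rw [hcs] at hs
      simp only [← Fin.succ_castSucc]
      linear_combination hs + ih

end
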